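/- Under the hypotheses of the modified Clausius setup (ρ with thermal marginals, energy-conserving unitary U), the quantity S(ρ'_A‖ρ_A) + S(ρ'_B‖ρ_B) equals β_A⟨Q_A⟩ + β_B⟨Q_B⟩ - ΔI(A:B), where S(·‖·) is quantum relative entropy and ρ'_i are the marginals of UρU†. -/

import Mathlib

open Matrix ComplexOrder Kronecker NormedSpace

/-- Partial trace over the second factor. -/
noncomputable def ptraceB {a b : ℕ} (ρ : Matrix (Fin a × Fin b) (Fin a × Fin b) ℂ) :
    Matrix (Fin a) (Fin a) ℂ :=
  Matrix.of fun i j => ∑ k : Fin b, ρ (i, k) (j, k)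

/-- Partial trace over the first factor. -/
noncomputable def ptraceA {a b : ℕ} (ρ : Matrix (Fin a × Fin b) (Fin a × Fin b) ℂ) :
    Matrix (Fin b) (Fin b) ℂ :=
  Matrix.of fun i j => ∑ k : Fin a, ρ (k, i) (k, j)

/-- The Gibbs (thermal) state `e^{-βH}/Tr e^{-βH}`. -/
noncomputable def gibbs {n : Type*} [Fintype n] [DecidableEq n] (β : ℝ) (Hm : Matrix (n) (n) ℂ) :
    Matrix (n) (n) ℂ :=
  ((NormedSpace.exp ((-β : ℂ) • Hm)).trace)⁻¹ • NormedSpace.exp ((-β : ℂ) • Hm)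

/-- Von Neumann entropy `-Tr ρ log ρ`, via the eigenvalues of a Hermitian matrix
(junk value `0` on non-Hermitian input). -/
noncomputable def vnEntropy {n : Type*} [Fintype n] [DecidableEq n] (ρ : Matrix (n) (n) ℂ) : ℝ :=
  if h : ρ.IsHermitian then -∑ i, (h.eigenvalues i) * Real.log (h.eigenvalues i) else 0

/-- Logarithm of a Hermitian matrix via the spectral theorem
(junk value `0` on non-Hermitian input). -/
noncomputable def hermLog {n : Type*} [Fintype n] [DecidableEq n] (A : Matrix (n) (n) ℂ) :
    Matrix (n) (n) ℂ :=
  if h : A.IsHermitian then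
    (Matrix.IsHermitian.eigenvectorUnitary h : Matrix (n) (n) ℂ)
      * Matrix.diagonal (fun i => (Real.log (h.eigenvalues i) : ℂ))
      * star (Matrix.IsHermitian.eigenvectorUnitary h : Matrix (n) (n) ℂ)
  else 0

/-- Quantum relative entropy `S(σ‖ρ) = Tr{σ log σ − σ log ρ}`. -/
noncomputable def relEntropy {n : Type*} [Fintype n] [DecidableEq n] (σ ρ : Matrix (n) (n) ℂ) : ℝ :=
  (σ * hermLog σ - σ * hermLog ρ).trace.re

/-- Quantum mutual information `I_ρ(A:B) = S(ρ_A) + S(ρ_B) − S(ρ)`. -/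
noncomputable def mutualInfo {a b : ℕ} (ρ : Matrix (Fin a × Fin b) (Fin a × Fin b) ℂ) : ℝ :=
  vnEntropy (ptraceB ρ) + vnEntropy (ptraceA ρ) - vnEntropy ρ

section Aux
open Polynomial

variable {n : Type*} [Fintype n] [DecidableEq n]

lemma aeval_conj (W M : Matrix n n ℂ) (h1 : W * Wᴴ = 1) (p : ℂ[X]) :
    aeval (W * M * Wᴴ) p = W * aeval M p * Wᴴ := by
  have h2 : Wᴴ * W = 1 := mul_eq_one_comm.mp h1
  let φ : Matrix n n ℂ →ₐ[ℂ] Matrix n n ℂ :=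
  { toFun := fun N => W * N * Wᴴ
    map_one' := by simpa using h1
    map_mul' := fun N₁ N₂ => by
      show W * (N₁ * N₂) * Wᴴ = W * N₁ * Wᴴ * (W * N₂ * Wᴴ)
      simp only [← mul_assoc]
      rw [mul_assoc (W * N₁) Wᴴ W, h2, mul_one]
    map_zero' := by simp
    map_add' := fun N₁ N₂ => by
      show W * (N₁ + N₂) * Wᴴ = _
      rw [mul_add, add_mul]
    commutes' := fun c => by
      show W * algebraMap ℂ (Matrix n n ℂ) c * Wᴴ = _
      simp [Algebra.algebraMap_eq_smul_one, Matrix.mul_smul, Matrix.smul_mul, h1] }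
  exact aeval_algHom_apply φ M p

lemma aeval_diag (v : n → ℂ) (p : ℂ[X]) :
    aeval (Matrix.diagonal v) p = Matrix.diagonal (fun i => p.eval (v i)) := by
  have := aeval_algHom_apply (Matrix.diagonalAlgHom (n := n) (α := ℂ) ℂ) v p
  simp only [Matrix.diagonalAlgHom_apply] at this
  rw [this]
  have h2 : (aeval v) p = fun i => eval (v i) p := by
    funext i
    rw [Polynomial.aeval_fn_apply, ← Polynomial.coe_aeval_eq_eval]
  rw [h2]

lemma eigU_mul_conj {A : Matrix n n ℂ} (hA : A.IsHermitian) :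
    (hA.eigenvectorUnitary : Matrix n n ℂ) * (hA.eigenvectorUnitary : Matrix n n ℂ)ᴴ = 1 := by
  simpa [Matrix.star_eq_conjTranspose] using
    Matrix.mem_unitaryGroup_iff.mp (hA.eigenvectorUnitary).2

lemma spectral_decomp {A : Matrix n n ℂ} (hA : A.IsHermitian) :
    A = (hA.eigenvectorUnitary : Matrix n n ℂ)
      * Matrix.diagonal (fun i => ((hA.eigenvalues i : ℝ) : ℂ))
      * (hA.eigenvectorUnitary : Matrix n n ℂ)ᴴ := by
  have h := hA.spectral_theorem
  simp [Matrix.star_eq_conjTranspose, Function.comp] at h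
  exact h

lemma mfun_welldef {A : Matrix n n ℂ} (hA : A.IsHermitian)
    (V : Matrix n n ℂ) (hV : V * Vᴴ = 1) (d : n → ℝ)
    (hdec : A = V * Matrix.diagonal (fun i => (d i : ℂ)) * Vᴴ) (f : ℝ → ℝ) :
    (hA.eigenvectorUnitary : Matrix n n ℂ)
      * Matrix.diagonal (fun i => (f (hA.eigenvalues i) : ℂ))
      * (hA.eigenvectorUnitary : Matrix n n ℂ)ᴴ
    = V * Matrix.diagonal (fun i => (f (d i) : ℂ)) * Vᴴ := by
  classical
  set S : Finset ℂ := (Finset.univ.image fun i => ((d i : ℂ))) ∪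
      (Finset.univ.image fun i => ((hA.eigenvalues i : ℂ))) with hS
  set p : ℂ[X] := Lagrange.interpolate S id (fun z => ((f z.re : ℝ) : ℂ)) with hp
  have hinj : Set.InjOn id (S : Set ℂ) := Function.injective_id.injOn
  have key : ∀ (W : Matrix n n ℂ), W * Wᴴ = 1 → ∀ e : n → ℝ,
      (∀ i, ((e i : ℂ)) ∈ S) → A = W * Matrix.diagonal (fun i => (e i : ℂ)) * Wᴴ →
      W * Matrix.diagonal (fun i => ((f (e i) : ℝ) : ℂ)) * Wᴴ = aeval A p := by
    intro W hW e he hAe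
    have hdg : (fun i => ((f (e i) : ℝ) : ℂ)) = fun i => p.eval ((e i : ℂ)) := by
      funext i
      have := Lagrange.eval_interpolate_at_node (r := fun z => ((f z.re : ℝ) : ℂ)) hinj (he i)
      simp only [id] at this
      rw [← hp] at this
      rw [this]
      norm_num
    rw [hdg, hAe, aeval_conj _ _ hW, aeval_diag]
  rw [key _ (eigU_mul_conj hA) hA.eigenvalues (fun i => by simp [hS]) (spectral_decomp hA),
    ← key V hV d (fun i => by simp [hS]) hdec]

lemma trace_conjd {W : Matrix n n ℂ} (hW : W * Wᴴ = 1) (v : n → ℂ) :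
    (W * Matrix.diagonal v * Wᴴ).trace = ∑ i, v i := by
  rw [Matrix.trace_mul_cycle, mul_eq_one_comm.mp hW, Matrix.one_mul,
    Matrix.trace_diagonal]

lemma conjd_mul {W : Matrix n n ℂ} (hW : W * Wᴴ = 1) (v w : n → ℂ) :
    (W * Matrix.diagonal v * Wᴴ) * (W * Matrix.diagonal w * Wᴴ)
      = W * Matrix.diagonal (fun i => v i * w i) * Wᴴ := by
  have h2 : Wᴴ * W = 1 := mul_eq_one_comm.mp hW
  calc (W * Matrix.diagonal v * Wᴴ) * (W * Matrix.diagonal w * Wᴴ)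
      = W * Matrix.diagonal v * (Wᴴ * W) * Matrix.diagonal w * Wᴴ := by
        simp only [Matrix.mul_assoc]
    _ = W * (Matrix.diagonal v * Matrix.diagonal w) * Wᴴ := by
        rw [h2, Matrix.mul_one]
        simp only [Matrix.mul_assoc]
    _ = W * Matrix.diagonal (fun i => v i * w i) * Wᴴ := by
        rw [Matrix.diagonal_mul_diagonal]

lemma conjd_isHermitian (W : Matrix n n ℂ) (d : n → ℝ) :
    (W * Matrix.diagonal (fun i => (d i : ℂ)) * Wᴴ).IsHermitian := by
  apply Matrix.isHermitian_mul_mul_conjTranspose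
  rw [Matrix.isHermitian_diagonal_iff]
  intro i
  exact isSelfAdjoint_iff.mpr (Complex.conj_ofReal _)

lemma sum_f_eigen {A : Matrix n n ℂ} (hA : A.IsHermitian)
    (V : Matrix n n ℂ) (hV : V * Vᴴ = 1) (d : n → ℝ)
    (hdec : A = V * Matrix.diagonal (fun i => (d i : ℂ)) * Vᴴ) (f : ℝ → ℝ) :
    ∑ i, f (hA.eigenvalues i) = ∑ i, f (d i) := by
  have h := congrArg Matrix.trace (mfun_welldef hA V hV d hdec f)
  rw [trace_conjd (eigU_mul_conj hA), trace_conjd hV] at h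
  exact_mod_cast h

lemma hermLog_eq {A : Matrix n n ℂ} (hA : A.IsHermitian)
    (V : Matrix n n ℂ) (hV : V * Vᴴ = 1) (d : n → ℝ)
    (hdec : A = V * Matrix.diagonal (fun i => (d i : ℂ)) * Vᴴ) :
    hermLog A = V * Matrix.diagonal (fun i => (Real.log (d i) : ℂ)) * Vᴴ := by
  rw [hermLog, dif_pos hA, Matrix.star_eq_conjTranspose]
  exact mfun_welldef hA V hV d hdec Real.log

lemma vnEntropy_eq_of_decomp {A : Matrix n n ℂ} (hA : A.IsHermitian)
    (V : Matrix n n ℂ) (hV : V * Vᴴ = 1) (d : n → ℝ)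
    (hdec : A = V * Matrix.diagonal (fun i => (d i : ℂ)) * Vᴴ) :
    vnEntropy A = -∑ i, d i * Real.log (d i) := by
  rw [vnEntropy, dif_pos hA,
    sum_f_eigen hA V hV d hdec (fun x => x * Real.log x)]

lemma trace_mul_hermLog_self {A : Matrix n n ℂ} (hA : A.IsHermitian) :
    (A * hermLog A).trace = ((∑ i, hA.eigenvalues i * Real.log (hA.eigenvalues i) : ℝ) : ℂ) := by
  have key : ∀ B : Matrix n n ℂ, B = (hA.eigenvectorUnitary : Matrix n n ℂ)
      * Matrix.diagonal (fun i => ((hA.eigenvalues i : ℝ) : ℂ))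
      * (hA.eigenvectorUnitary : Matrix n n ℂ)ᴴ →
      (B * hermLog A).trace
        = ((∑ i, hA.eigenvalues i * Real.log (hA.eigenvalues i) : ℝ) : ℂ) := by
    intro B hB
    rw [hB, hermLog_eq hA _ (eigU_mul_conj hA) hA.eigenvalues (spectral_decomp hA),
      conjd_mul (eigU_mul_conj hA), trace_conjd (eigU_mul_conj hA)]
    push_cast
    rfl
  exact key A (spectral_decomp hA)

lemma vnEntropy_trace_form {A : Matrix n n ℂ} (hA : A.IsHermitian) :
    vnEntropy A = -(A * hermLog A).trace.re := by
  rw [vnEntropy, dif_pos hA, trace_mul_hermLog_self hA, Complex.ofReal_re]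
end Aux
section Thermo
variable {n : Type*} [Fintype n] [DecidableEq n]

lemma gibbs_decomp {H : Matrix n n ℂ} (hH : H.IsHermitian) (β : ℝ) :
    (NormedSpace.exp ((-β : ℂ) • H)).trace = ((∑ i, Real.exp (-β * hH.eigenvalues i) : ℝ) : ℂ) ∧
    gibbs β H = (hH.eigenvectorUnitary : Matrix n n ℂ) *
      Matrix.diagonal (fun i => ((Real.exp (-β * hH.eigenvalues i)
        / (∑ j, Real.exp (-β * hH.eigenvalues j)) : ℝ) : ℂ))
      * (hH.eigenvectorUnitary : Matrix n n ℂ)ᴴ := by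
  set V := (hH.eigenvectorUnitary : Matrix n n ℂ) with hVdef
  have hV : V * Vᴴ = 1 := eigU_mul_conj hH
  have hVinv : V⁻¹ = Vᴴ := Matrix.inv_eq_right_inv hV
  set z : ℝ := ∑ j, Real.exp (-β * hH.eigenvalues j) with hz
  have hexp : NormedSpace.exp ((-β : ℂ) • H)
      = V * Matrix.diagonal (fun i => ((Real.exp (-β * hH.eigenvalues i) : ℝ) : ℂ)) * Vᴴ := by
    have h1 : (-β : ℂ) • H
        = V * Matrix.diagonal ((-β : ℂ) • fun i => (hH.eigenvalues i : ℂ)) * V⁻¹ := by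
      rw [hVinv]
      conv_lhs => rw [spectral_decomp hH]
      rw [Matrix.diagonal_smul, Matrix.mul_smul, Matrix.smul_mul]
    have hu : IsUnit V := ⟨⟨V, Vᴴ, hV, mul_eq_one_comm.mp hV⟩, rfl⟩
    rw [h1, Matrix.exp_conj V _ hu, hVinv, Matrix.exp_diagonal]
    have hfun : NormedSpace.exp ((-(β:ℂ)) • fun i => ((hH.eigenvalues i : ℝ) : ℂ))
        = fun i => ((Real.exp (-β * hH.eigenvalues i) : ℝ) : ℂ) := by
      funext i
      rw [Pi.coe_exp]
      simp only [Pi.smul_apply, smul_eq_mul]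
      rw [← Complex.exp_eq_exp_ℂ]
      norm_cast
    rw [hfun]
  have htr : (NormedSpace.exp ((-β : ℂ) • H)).trace = (z : ℂ) := by
    rw [hexp, trace_conjd hV, hz]
    norm_cast
  refine ⟨htr, ?_⟩
  rw [gibbs, htr, hexp]
  have hsm : V * ((z : ℂ)⁻¹ • Matrix.diagonal (fun i => ((Real.exp (-β * hH.eigenvalues i) : ℝ) : ℂ))) * Vᴴ
      = (z : ℂ)⁻¹ • (V * Matrix.diagonal (fun i => ((Real.exp (-β * hH.eigenvalues i) : ℝ) : ℂ)) * Vᴴ) := by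
    rw [Matrix.mul_smul, Matrix.smul_mul]
  rw [← hsm, ← Matrix.diagonal_smul]
  have hfun2 : ((z : ℂ)⁻¹ • fun i => ((Real.exp (-β * hH.eigenvalues i) : ℝ) : ℂ))
      = fun i => ((Real.exp (-β * hH.eigenvalues i) / z : ℝ) : ℂ) := by
    funext i
    simp only [Pi.smul_apply, smul_eq_mul]
    push_cast
    ring
  rw [hfun2]
end Thermo
section Thermo2
variable {n : Type*} [Fintype n] [DecidableEq n]

lemma hermLog_gibbs [Nonempty n] {H : Matrix n n ℂ} (hH : H.IsHermitian) (β : ℝ) :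
    hermLog (gibbs β H) = (-(β : ℂ)) • H
      - ((Real.log (∑ j, Real.exp (-β * hH.eigenvalues j)) : ℝ) : ℂ) • 1 := by
  obtain ⟨htr, hg⟩ := gibbs_decomp hH β
  set V := (hH.eigenvectorUnitary : Matrix n n ℂ) with hVdef
  have hV : V * Vᴴ = 1 := eigU_mul_conj hH
  set z : ℝ := ∑ j, Real.exp (-β * hH.eigenvalues j) with hz
  have hzpos : 0 < z := Finset.sum_pos (fun i _ => Real.exp_pos _) Finset.univ_nonempty
  have hherm : (gibbs β H).IsHermitian := by rw [hg]; exact conjd_isHermitian _ _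
  rw [hermLog_eq hherm V hV _ hg]
  have hlog : (fun i => ((Real.log (Real.exp (-β * hH.eigenvalues i) / z) : ℝ) : ℂ))
      = fun i => (-(β : ℂ)) * (hH.eigenvalues i : ℂ) - ((Real.log z : ℝ) : ℂ) := by
    funext i
    rw [Real.log_div (Real.exp_ne_zero _) (ne_of_gt hzpos), Real.log_exp]
    push_cast
    ring
  rw [hlog]
  have hdiag : Matrix.diagonal (fun i => (-(β : ℂ)) * (hH.eigenvalues i : ℂ) - ((Real.log z : ℝ) : ℂ))
      = (-(β : ℂ)) • Matrix.diagonal (fun i => ((hH.eigenvalues i : ℝ) : ℂ))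
        - ((Real.log z : ℝ) : ℂ) • (1 : Matrix n n ℂ) := by
    ext i j
    by_cases h : i = j <;>
      simp [Matrix.diagonal_apply, h, Matrix.one_apply, smul_eq_mul]
  rw [hdiag, Matrix.mul_sub, Matrix.sub_mul]
  rw [Matrix.mul_smul, Matrix.smul_mul, ← spectral_decomp hH]
  rw [Matrix.mul_smul, Matrix.smul_mul, Matrix.mul_one, hV]

lemma relEntropy_gibbs [Nonempty n] {σ H : Matrix n n ℂ} (hσ : σ.IsHermitian)
    (hσ1 : σ.trace = 1) (hH : H.IsHermitian) (β : ℝ) :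
    relEntropy σ (gibbs β H) = -vnEntropy σ + β * (σ * H).trace.re
      + Real.log (∑ j, Real.exp (-β * hH.eigenvalues j)) := by
  rw [relEntropy, Matrix.trace_sub, Complex.sub_re, hermLog_gibbs hH β]
  rw [Matrix.mul_sub, Matrix.mul_smul, Matrix.mul_smul, Matrix.mul_one,
    Matrix.trace_sub, Matrix.trace_smul, Matrix.trace_smul, hσ1]
  rw [vnEntropy_trace_form hσ]
  simp only [smul_eq_mul, mul_one, Complex.sub_re, Complex.neg_re, Complex.ofReal_re,
    neg_mul, Complex.mul_re, Complex.ofReal_im, zero_mul, sub_zero, Complex.one_re,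
    Complex.one_im, mul_zero]
  ring

lemma vnEntropy_gibbs [Nonempty n] {H : Matrix n n ℂ} (hH : H.IsHermitian) (β : ℝ)
    (h1 : (gibbs β H).trace = 1) :
    vnEntropy (gibbs β H) = β * ((gibbs β H) * H).trace.re
      + Real.log (∑ j, Real.exp (-β * hH.eigenvalues j)) := by
  have hherm : (gibbs β H).IsHermitian := by
    rw [(gibbs_decomp hH β).2]; exact conjd_isHermitian _ _
  have h0 : relEntropy (gibbs β H) (gibbs β H) = 0 := by
    rw [relEntropy, sub_self, Matrix.trace_zero, Complex.zero_re]
  have h2 := relEntropy_gibbs hherm h1 hH β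
  rw [h0] at h2
  linarith
end Thermo2
section PT

lemma ptraceB_trace {a b : ℕ} (ρ : Matrix (Fin a × Fin b) (Fin a × Fin b) ℂ) :
    (ptraceB ρ).trace = ρ.trace := by
  simp [Matrix.trace, ptraceB, Matrix.diag, Fintype.sum_prod_type]

lemma ptraceA_trace {a b : ℕ} (ρ : Matrix (Fin a × Fin b) (Fin a × Fin b) ℂ) :
    (ptraceA ρ).trace = ρ.trace := by
  rw [Matrix.trace, Matrix.trace, Fintype.sum_prod_type_right]
  rfl

lemma ptraceB_isHermitian {a b : ℕ} {ρ : Matrix (Fin a × Fin b) (Fin a × Fin b) ℂ}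
    (h : ρ.IsHermitian) : (ptraceB ρ).IsHermitian := by
  unfold Matrix.IsHermitian
  ext i j
  simp only [Matrix.conjTranspose_apply, ptraceB, Matrix.of_apply, star_sum]
  refine Finset.sum_congr rfl fun k _ => ?_
  rw [← Matrix.conjTranspose_apply, h]

lemma ptraceA_isHermitian {a b : ℕ} {ρ : Matrix (Fin a × Fin b) (Fin a × Fin b) ℂ}
    (h : ρ.IsHermitian) : (ptraceA ρ).IsHermitian := by
  unfold Matrix.IsHermitian
  ext i j
  simp only [Matrix.conjTranspose_apply, ptraceA, Matrix.of_apply, star_sum]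
  refine Finset.sum_congr rfl fun k _ => ?_
  rw [← Matrix.conjTranspose_apply, h]

lemma vnEntropy_conj {m : Type*} [Fintype m] [DecidableEq m] {ρ U : Matrix m m ℂ}
    (hρ : ρ.IsHermitian) (hU : U * Uᴴ = 1) : vnEntropy (U * ρ * Uᴴ) = vnEntropy ρ := by
  have hρ'H : (U * ρ * Uᴴ).IsHermitian := Matrix.isHermitian_mul_mul_conjTranspose U hρ
  set V := (hρ.eigenvectorUnitary : Matrix m m ℂ) with hVdef
  have hV : V * Vᴴ = 1 := eigU_mul_conj hρ
  have hW : (U * V) * (U * V)ᴴ = 1 := by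
    rw [Matrix.conjTranspose_mul, Matrix.mul_assoc, ← Matrix.mul_assoc V, hV, Matrix.one_mul, hU]
  have hdec : U * ρ * Uᴴ
      = (U * V) * Matrix.diagonal (fun i => ((hρ.eigenvalues i : ℝ) : ℂ)) * (U * V)ᴴ := by
    rw [Matrix.conjTranspose_mul]
    conv_lhs => rw [spectral_decomp hρ]
    simp only [Matrix.mul_assoc]
    rfl
  rw [vnEntropy_eq_of_decomp hρ'H (U * V) hW _ hdec, vnEntropy, dif_pos hρ]

end PT

theorem entropy_production_identity'
    {a b : ℕ} (HA : Matrix (Fin a) (Fin a) ℂ) (HB : Matrix (Fin b) (Fin b) ℂ)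
    (hHA : HA.IsHermitian) (hHB : HB.IsHermitian) (βA βB : ℝ)
    (ρ : Matrix (Fin a × Fin b) (Fin a × Fin b) ℂ)
    (hρ : ρ.PosSemidef) (hρ1 : ρ.trace = 1)
    (hmargA : ptraceB ρ = gibbs βA HA) (hmargB : ptraceA ρ = gibbs βB HB)
    (U : Matrix (Fin a × Fin b) (Fin a × Fin b) ℂ)
    (hU : U * Uᴴ = 1 ∧ Uᴴ * U = 1)
    (ρ' : Matrix (Fin a × Fin b) (Fin a × Fin b) ℂ) (hρ' : ρ' = U * ρ * Uᴴ) :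
    relEntropy (ptraceB ρ') (ptraceB ρ) + relEntropy (ptraceA ρ') (ptraceA ρ)
      = βA * ((ptraceB ρ' - ptraceB ρ) * HA).trace.re
        + βB * ((ptraceA ρ' - ptraceA ρ) * HB).trace.re
        - (mutualInfo ρ' - mutualInfo ρ) := by
  have hne : Nonempty (Fin a × Fin b) := by
    by_contra h
    rw [not_nonempty_iff] at h
    rw [Matrix.trace, Finset.univ_eq_empty, Finset.sum_empty] at hρ1
    exact one_ne_zero hρ1.symm
  haveI hna : Nonempty (Fin a) := ⟨(Classical.arbitrary (Fin a × Fin b)).1⟩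
  haveI hnb : Nonempty (Fin b) := ⟨(Classical.arbitrary (Fin a × Fin b)).2⟩
  have hρH : ρ.IsHermitian := hρ.1
  have hρ'H : ρ'.IsHermitian := by
    rw [hρ']; exact Matrix.isHermitian_mul_mul_conjTranspose U hρH
  have hσA : (ptraceB ρ').IsHermitian := ptraceB_isHermitian hρ'H
  have hσB : (ptraceA ρ').IsHermitian := ptraceA_isHermitian hρ'H
  have htrρ' : ρ'.trace = 1 := by
    rw [hρ', Matrix.trace_mul_cycle, hU.2, Matrix.one_mul, hρ1]
  have htrσA : (ptraceB ρ').trace = 1 := by rw [ptraceB_trace, htrρ']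
  have htrσB : (ptraceA ρ').trace = 1 := by rw [ptraceA_trace, htrρ']
  have htrρA : (gibbs βA HA).trace = 1 := by rw [← hmargA, ptraceB_trace, hρ1]
  have htrρB : (gibbs βB HB).trace = 1 := by rw [← hmargB, ptraceA_trace, hρ1]
  have hSS : vnEntropy ρ' = vnEntropy ρ := by rw [hρ']; exact vnEntropy_conj hρH hU.1
  simp only [mutualInfo]
  rw [hmargA, hmargB]
  rw [relEntropy_gibbs hσA htrσA hHA βA, relEntropy_gibbs hσB htrσB hHB βB]
  rw [vnEntropy_gibbs hHA βA htrρA, vnEntropy_gibbs hHB βB htrρB, hSS]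
  have hQA : ((ptraceB ρ' - gibbs βA HA) * HA).trace.re
      = ((ptraceB ρ') * HA).trace.re - ((gibbs βA HA) * HA).trace.re := by
    rw [Matrix.sub_mul, Matrix.trace_sub, Complex.sub_re]
  have hQB : ((ptraceA ρ' - gibbs βB HB) * HB).trace.re
      = ((ptraceA ρ') * HB).trace.re - ((gibbs βB HB) * HB).trace.re := by
    rw [Matrix.sub_mul, Matrix.trace_sub, Complex.sub_re]
  rw [hQA, hQB]
  ring
/-- Entropy-production identity: under the modified Clausius setup,
`S(ρ'_A‖ρ_A) + S(ρ'_B‖ρ_B) = β_A⟨Q_A⟩ + β_B⟨Q_B⟩ − ΔI(A:B)`. -/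
theorem entropy_production_identity
    {a b : ℕ} (HA : Matrix (Fin a) (Fin a) ℂ) (HB : Matrix (Fin b) (Fin b) ℂ)
    (hHA : HA.IsHermitian) (hHB : HB.IsHermitian) (βA βB : ℝ)
    (ρ : Matrix (Fin a × Fin b) (Fin a × Fin b) ℂ)
    (hρ : ρ.PosSemidef) (hρ1 : ρ.trace = 1)
    (hmargA : ptraceB ρ = gibbs βA HA) (hmargB : ptraceA ρ = gibbs βB HB)
    (U : Matrix (Fin a × Fin b) (Fin a × Fin b) ℂ)
    (hU : U * Uᴴ = 1 ∧ Uᴴ * U = 1)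
    (hcomm : U * (HA ⊗ₖ (1 : Matrix (Fin b) (Fin b) ℂ)
          + (1 : Matrix (Fin a) (Fin a) ℂ) ⊗ₖ HB)
        = (HA ⊗ₖ (1 : Matrix (Fin b) (Fin b) ℂ)
          + (1 : Matrix (Fin a) (Fin a) ℂ) ⊗ₖ HB) * U)
    (ρ' : Matrix (Fin a × Fin b) (Fin a × Fin b) ℂ) (hρ' : ρ' = U * ρ * Uᴴ) :
    relEntropy (ptraceB ρ') (ptraceB ρ) + relEntropy (ptraceA ρ') (ptraceA ρ)
      = βA * ((ptraceB ρ' - ptraceB ρ) * HA).trace.re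
        + βB * ((ptraceA ρ' - ptraceA ρ) * HB).trace.re
        - (mutualInfo ρ' - mutualInfo ρ) := by
  exact entropy_production_identity' HA HB hHA hHB βA βB ρ hρ hρ1 hmargA hmargB U hU ρ' hρ'
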